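/- Let F be a twist of H and F⁻¹ the corresponding twist of H^F. Then the deformation map D_{F⁻¹} associated with the twist F⁻¹ of H^F equals the inverse of D_F: D_{F⁻¹}(P) = D_F⁻¹(P) for all P, where D_F(P) = (f̄^α ▶ P) f̄_α. In particular χ_F := S^F(f^β)f_β = χ. -/

import Mathlib

open TensorProduct

noncomputable section

variable (K : Type*) [CommRing K] (H : Type*) [Ring H] [HopfAlgebra K H]

namespace TwistPaper

def muH : H ⊗[K] H →ₗ[K] H := LinearMap.mul' K H
def ΔH : H →ₗ[K] H ⊗[K] H := Coalgebra.comul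
def εH : H →ₗ[K] K := Coalgebra.counit
def SH : H →ₗ[K] H := HopfAlgebra.antipode (R := K)

def ins3 : H ⊗[K] H →ₗ[K] H ⊗[K] (H ⊗[K] H) :=
  LinearMap.lTensor H ((TensorProduct.mk K H H).flip 1)
def ins1 : H ⊗[K] H →ₗ[K] H ⊗[K] (H ⊗[K] H) :=
  TensorProduct.mk K H (H ⊗[K] H) 1
def comulLeft : H ⊗[K] H →ₗ[K] H ⊗[K] (H ⊗[K] H) :=
  (TensorProduct.assoc K H H H).toLinearMap ∘ₗ (ΔH K H).rTensor H
def comulRight : H ⊗[K] H →ₗ[K] H ⊗[K] (H ⊗[K] H) :=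
  (ΔH K H).lTensor H
def counitLeft : H ⊗[K] H →ₗ[K] H :=
  (TensorProduct.lid K H).toLinearMap ∘ₗ (εH K H).rTensor H
def counitRight : H ⊗[K] H →ₗ[K] H :=
  (TensorProduct.rid K H).toLinearMap ∘ₗ (εH K H).lTensor H

/-- `F` is a twist of the Hopf algebra `H` with inverse `Finv`. -/
structure IsTwist (F Finv : H ⊗[K] H) : Prop where
  mul_inv : F * Finv = 1
  inv_mul : Finv * F = 1
  cocycle : ins3 K H F * comulLeft K H F = ins1 K H F * comulRight K H F
  counit_left : counitLeft K H F = 1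
  counit_right : counitRight K H F = 1

/-- The twisted coproduct `Δ^F(ξ) = F Δ(ξ) F⁻¹`. -/
def twistComul (F Finv : H ⊗[K] H) : H →ₗ[K] H ⊗[K] H :=
  LinearMap.mulLeft K F ∘ₗ LinearMap.mulRight K Finv ∘ₗ ΔH K H

/-- `χ = f^α S(f_α)`. -/
def chi (F : H ⊗[K] H) : H := muH K H ((SH K H).lTensor H F)
/-- `χ⁻¹ = S(f̄^α) f̄_α`. -/
def chiInv (Finv : H ⊗[K] H) : H := muH K H ((SH K H).rTensor H Finv)

/-- The twisted antipode `S^F(ξ) = χ S(ξ) χ⁻¹`. -/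
def twistAntipode (F Finv : H ⊗[K] H) : H →ₗ[K] H :=
  LinearMap.mulLeft K (chi K H F) ∘ₗ LinearMap.mulRight K (chiInv K H Finv) ∘ₗ SH K H

/-- `sw x f g c v w = Σ c (f x¹ v) (g x² w)` for `x = Σ x¹ ⊗ x²`. -/
def sw {V W V' W' Z : Type*}
    [AddCommGroup V] [Module K V] [AddCommGroup W] [Module K W]
    [AddCommGroup V'] [Module K V'] [AddCommGroup W'] [Module K W']
    [AddCommGroup Z] [Module K Z]
    (x : H ⊗[K] H) (f : H →ₗ[K] V →ₗ[K] V') (g : H →ₗ[K] W →ₗ[K] W')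
    (c : V' →ₗ[K] W' →ₗ[K] Z) : V →ₗ[K] W →ₗ[K] Z :=
  ((TensorProduct.mapBilinear (RingHom.id K) H H V' W').compr₂
      (TensorProduct.lift c ∘ₗ LinearMap.applyₗ (R := K) x)).compl₁₂ f.flip g.flip

/-- `ρ` is a left `H`-module structure. -/
def IsHAction {V : Type*} [AddCommGroup V] [Module K V] (ρ : H →ₗ[K] V →ₗ[K] V) : Prop :=
  (∀ ξ ζ : H, ∀ v : V, ρ (ξ * ζ) v = ρ ξ (ρ ζ v)) ∧ (∀ v : V, ρ 1 v = v)

variable {M : Type*} [AddCommGroup M] [Module K M]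

/-- `twistEnd F1 F2 (η ⊗ ζ) = F1 η ∘ₗ F2 ζ` as an operator on `M`. -/
def twistEnd (F1 F2 : H →ₗ[K] M →ₗ[K] M) : H ⊗[K] H →ₗ[K] M →ₗ[K] M :=
  TensorProduct.lift ((LinearMap.llcomp K M M M ∘ₗ F1).compl₂ F2)

/-- `𝔸` (with product `m`) is an `(H,μ)`-bimodule (left action `L`, right action `Rm`)
satisfying the generalized associativity conditions
`(PQ)ξ = P(Qξ)`, `(Pξ)Q = P(ξQ)`, `ξ(PQ) = (ξP)Q`. -/
structure IsHBimoduleAlgebra (m : M →ₗ[K] M →ₗ[K] M) (L Rm : H →ₗ[K] M →ₗ[K] M) : Prop where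
  left_mul : ∀ (ξ ζ : H) (P : M), L (ξ * ζ) P = L ξ (L ζ P)
  left_one : ∀ P : M, L 1 P = P
  right_mul : ∀ (ξ ζ : H) (P : M), Rm (ξ * ζ) P = Rm ζ (Rm ξ P)
  right_one : ∀ P : M, Rm 1 P = P
  commute : ∀ (ξ ζ : H) (P : M), L ξ (Rm ζ P) = Rm ζ (L ξ P)
  assoc1 : ∀ (ξ : H) (P Q : M), Rm ξ (m P Q) = m P (Rm ξ Q)
  assoc2 : ∀ (ξ : H) (P Q : M), m (Rm ξ P) Q = m P (L ξ Q)
  assoc3 : ∀ (ξ : H) (P Q : M), L ξ (m P Q) = m (L ξ P) Q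

/-- The `H`-adjoint action `ξ ▶ P = ξ₁ P S(ξ₂)`. -/
def adjAct (L Rm : H →ₗ[K] M →ₗ[K] M) : H →ₗ[K] M →ₗ[K] M :=
  twistEnd K H L (Rm ∘ₗ SH K H) ∘ₗ ΔH K H

/-- The deformation map `D_F(P) = (f̄^α ▶ P) f̄_α`. -/
def DF (Finv : H ⊗[K] H) (L Rm : H →ₗ[K] M →ₗ[K] M) : M →ₗ[K] M :=
  twistEnd K H Rm (adjAct K H L Rm) (TensorProduct.comm K H H Finv)

/-- The star product `P ⋆ Q = (f̄^α ▶ P)(f̄_α ▶ Q)` on `𝔸`. -/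
def starAlg (Finv : H ⊗[K] H) (m : M →ₗ[K] M →ₗ[K] M) (L Rm : H →ₗ[K] M →ₗ[K] M) :
    M →ₗ[K] M →ₗ[K] M :=
  sw K H Finv (adjAct K H L Rm) (adjAct K H L Rm) m


/-- The `H^F`-adjoint action `ξ ▶_F P = ξ_{1_F} P S^F(ξ_{2_F})`. -/
def adjActF (F Finv : H ⊗[K] H) (L Rm : H →ₗ[K] M →ₗ[K] M) : H →ₗ[K] M →ₗ[K] M :=
  twistEnd K H L (Rm ∘ₗ twistAntipode K H F Finv) ∘ₗ twistComul K H F Finv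

/-- The deformation map `D_{F⁻¹}(P) = (f^β ▶_F P) f_β` associated with the twist
`F⁻¹` of `H^F`. -/
def DFinv (F Finv : H ⊗[K] H) (L Rm : H →ₗ[K] M →ₗ[K] M) : M →ₗ[K] M :=
  twistEnd K H Rm (adjActF K H F Finv L Rm) (TensorProduct.comm K H H F)


/-! ### Auxiliary machinery -/

set_option maxHeartbeats 1000000
set_option synthInstance.maxHeartbeats 200000

section Aux

open LinearMap

lemma muH_tmul (x y : H) : muH K H (x ⊗ₜ[K] y) = x * y := rfl

lemma SH_one : SH K H 1 = 1 := by
  have h := HopfAlgebra.mul_antipode_rTensor_comul_apply (R := K) (A := H) 1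
  rw [Bialgebra.comul_one, Algebra.TensorProduct.one_def, Bialgebra.counit_one] at h
  exact HopfAlgebra.antipode_one (R := K) (A := H)

/-- `Σ S(w¹) * w²`, i.e. `chiInv` as a linear map. -/
noncomputable def LchiInv : H ⊗[K] H →ₗ[K] H := muH K H ∘ₗ (SH K H).rTensor H

/-- `Σ w¹ * S(w²)`, i.e. `chi` as a linear map. -/
noncomputable def Lchi : H ⊗[K] H →ₗ[K] H := muH K H ∘ₗ (SH K H).lTensor H

@[simp] lemma LchiInv_tmul (x y : H) : LchiInv K H (x ⊗ₜ[K] y) = SH K H x * y := rfl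
@[simp] lemma Lchi_tmul (x y : H) : Lchi K H (x ⊗ₜ[K] y) = x * SH K H y := rfl

lemma chi_eq_Lchi (X : H ⊗[K] H) : chi K H X = Lchi K H X := rfl
lemma chiInv_eq_LchiInv (X : H ⊗[K] H) : chiInv K H X = LchiInv K H X := rfl

lemma LchiInv_comul (x : H) : LchiInv K H (ΔH K H x) = algebraMap K H (εH K H x) :=
  HopfAlgebra.mul_antipode_rTensor_comul_apply (R := K) (A := H) x

lemma Lchi_comul (x : H) : Lchi K H (ΔH K H x) = algebraMap K H (εH K H x) :=
  HopfAlgebra.mul_antipode_lTensor_comul_apply (R := K) (A := H) x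

/-! #### A minimal convolution framework, to prove that the antipode is an
anti-homomorphism of algebras (this is only a TODO in Mathlib). -/

section Conv

variable {C : Type*} [AddCommGroup C] [Module K C]

/-- Convolution product on `C →ₗ[K] H` relative to a comultiplication on `C`. -/
noncomputable def conv (Dc : C →ₗ[K] C ⊗[K] C) (f g : C →ₗ[K] H) : C →ₗ[K] H :=
  muH K H ∘ₗ TensorProduct.map f g ∘ₗ Dc

lemma conv_apply (Dc : C →ₗ[K] C ⊗[K] C) (f g : C →ₗ[K] H) (x : C) :
    conv K H Dc f g x = muH K H (TensorProduct.map f g (Dc x)) := rfl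

lemma conv_assoc (Dc : C →ₗ[K] C ⊗[K] C)
    (hco : ∀ x : C, TensorProduct.assoc K C C C (Dc.rTensor C (Dc x)) = Dc.lTensor C (Dc x))
    (f g h : C →ₗ[K] H) :
    conv K H Dc (conv K H Dc f g) h = conv K H Dc f (conv K H Dc g h) := by
  have claimA : ∀ w : C ⊗[K] C,
      muH K H (TensorProduct.map (conv K H Dc f g) h w) =
      (muH K H ∘ₗ TensorProduct.map (muH K H ∘ₗ TensorProduct.map f g) h) (Dc.rTensor C w) := by
    intro w
    induction w using TensorProduct.induction_on with
    | zero => simp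
    | tmul c c' => simp [conv_apply]
    | add p q hp hq => simp [hp, hq]
  have claimB : ∀ w : C ⊗[K] C,
      muH K H (TensorProduct.map f (conv K H Dc g h) w) =
      (muH K H ∘ₗ TensorProduct.map f (muH K H ∘ₗ TensorProduct.map g h)) (Dc.lTensor C w) := by
    intro w
    induction w using TensorProduct.induction_on with
    | zero => simp
    | tmul c c' => simp [conv_apply]
    | add p q hp hq => simp [hp, hq]
  have claimC : (muH K H ∘ₗ TensorProduct.map (muH K H ∘ₗ TensorProduct.map f g) h) =
      (muH K H ∘ₗ TensorProduct.map f (muH K H ∘ₗ TensorProduct.map g h)) ∘ₗ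
        (TensorProduct.assoc K C C C).toLinearMap := by
    apply TensorProduct.ext_threefold
    intro x y z
    simp [muH, mul_assoc]
  ext x
  simp only [conv_apply, LinearMap.coe_comp, Function.comp_apply]
  rw [claimA (Dc x), claimB (Dc x), claimC]
  simp only [LinearMap.coe_comp, LinearEquiv.coe_coe, Function.comp_apply]
  rw [hco x]

lemma conv_unit_left (Dc : C →ₗ[K] C ⊗[K] C) (Ec : C →ₗ[K] K)
    (hl : ∀ x : C, Ec.rTensor C (Dc x) = (1 : K) ⊗ₜ[K] x) (f : C →ₗ[K] H) :
    conv K H Dc ((Algebra.linearMap K H) ∘ₗ Ec) f = f := by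
  ext x
  have claim : ∀ w : C ⊗[K] C,
      muH K H (TensorProduct.map ((Algebra.linearMap K H) ∘ₗ Ec) f w) =
      (muH K H ∘ₗ TensorProduct.map (Algebra.linearMap K H) f) (Ec.rTensor C w) := by
    intro w
    induction w using TensorProduct.induction_on with
    | zero => simp
    | tmul c c' => simp
    | add p q hp hq => simp only [map_add, hp, hq]
  simp only [conv_apply]
  rw [claim (Dc x), hl x]
  simp [muH]

lemma conv_unit_right (Dc : C →ₗ[K] C ⊗[K] C) (Ec : C →ₗ[K] K)
    (hr : ∀ x : C, Ec.lTensor C (Dc x) = x ⊗ₜ[K] (1 : K)) (f : C →ₗ[K] H) :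
    conv K H Dc f ((Algebra.linearMap K H) ∘ₗ Ec) = f := by
  ext x
  have claim : ∀ w : C ⊗[K] C,
      muH K H (TensorProduct.map f ((Algebra.linearMap K H) ∘ₗ Ec) w) =
      (muH K H ∘ₗ TensorProduct.map f (Algebra.linearMap K H)) (Ec.lTensor C w) := by
    intro w
    induction w using TensorProduct.induction_on with
    | zero => simp
    | tmul c c' => simp
    | add p q hp hq => simp only [map_add, hp, hq]
  simp only [conv_apply]
  rw [claim (Dc x), hr x]
  simp [muH]

lemma conv_inv_unique (Dc : C →ₗ[K] C ⊗[K] C) (Ec : C →ₗ[K] K)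
    (hco : ∀ x : C, TensorProduct.assoc K C C C (Dc.rTensor C (Dc x)) = Dc.lTensor C (Dc x))
    (hl : ∀ x : C, Ec.rTensor C (Dc x) = (1 : K) ⊗ₜ[K] x)
    (hr : ∀ x : C, Ec.lTensor C (Dc x) = x ⊗ₜ[K] (1 : K))
    (f M g : C →ₗ[K] H)
    (hfM : conv K H Dc f M = (Algebra.linearMap K H) ∘ₗ Ec)
    (hMg : conv K H Dc M g = (Algebra.linearMap K H) ∘ₗ Ec) :
    f = g := by
  calc f = conv K H Dc f ((Algebra.linearMap K H) ∘ₗ Ec) := (conv_unit_right K H Dc Ec hr f).symm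
  _ = conv K H Dc f (conv K H Dc M g) := by rw [hMg]
  _ = conv K H Dc (conv K H Dc f M) g := (conv_assoc K H Dc hco f M g).symm
  _ = conv K H Dc ((Algebra.linearMap K H) ∘ₗ Ec) g := by rw [hfM]
  _ = g := conv_unit_left K H Dc Ec hl g

end Conv


section AntipodeMul

open LinearMap

/-- Comultiplication on `H ⊗ H` (tensor-product coalgebra), defined by hand to stay
universe polymorphic. -/
noncomputable def Dc2 : H ⊗[K] H →ₗ[K] (H ⊗[K] H) ⊗[K] (H ⊗[K] H) :=
  (TensorProduct.tensorTensorTensorComm K H H H H).toLinearMap ∘ₗ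
    TensorProduct.map (ΔH K H) (ΔH K H)

/-- Counit on `H ⊗ H`. -/
noncomputable def Ec2 : H ⊗[K] H →ₗ[K] K :=
  LinearMap.mul' K K ∘ₗ TensorProduct.map (εH K H) (εH K H)

lemma Dc2_tmul (a b : H) :
    Dc2 K H (a ⊗ₜ[K] b) =
      TensorProduct.tensorTensorTensorComm K H H H H (ΔH K H a ⊗ₜ[K] ΔH K H b) := by
  simp [Dc2]

@[simp] lemma Ec2_tmul (a b : H) : Ec2 K H (a ⊗ₜ[K] b) = εH K H a * εH K H b := by
  simp [Ec2]

/-- leg-shuffle `((x⊗y)⊗z)⊗((u⊗v)⊗w) ↦ ((x⊗u)⊗(y⊗v))⊗(z⊗w)`. -/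
noncomputable def Lsh1 :
    ((H ⊗[K] H) ⊗[K] H) ⊗[K] ((H ⊗[K] H) ⊗[K] H) →ₗ[K]
      ((H ⊗[K] H) ⊗[K] (H ⊗[K] H)) ⊗[K] (H ⊗[K] H) :=
  TensorProduct.map (TensorProduct.tensorTensorTensorComm K H H H H).toLinearMap LinearMap.id ∘ₗ
    (TensorProduct.tensorTensorTensorComm K (H ⊗[K] H) H (H ⊗[K] H) H).toLinearMap

/-- leg-shuffle `(x⊗(y⊗z))⊗(u⊗(v⊗w)) ↦ (x⊗u)⊗((y⊗v)⊗(z⊗w))`. -/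
noncomputable def Lsh2 :
    (H ⊗[K] (H ⊗[K] H)) ⊗[K] (H ⊗[K] (H ⊗[K] H)) →ₗ[K]
      (H ⊗[K] H) ⊗[K] ((H ⊗[K] H) ⊗[K] (H ⊗[K] H)) :=
  TensorProduct.map LinearMap.id (TensorProduct.tensorTensorTensorComm K H H H H).toLinearMap ∘ₗ
    (TensorProduct.tensorTensorTensorComm K H (H ⊗[K] H) H (H ⊗[K] H)).toLinearMap

lemma key1 (u v : H ⊗[K] H) :
    (Dc2 K H).rTensor (H ⊗[K] H)
        (TensorProduct.tensorTensorTensorComm K H H H H (u ⊗ₜ[K] v)) =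
      Lsh1 K H (((ΔH K H).rTensor H u) ⊗ₜ[K] ((ΔH K H).rTensor H v)) := by
  induction u using TensorProduct.induction_on with
  | zero => simp
  | tmul x y =>
    induction v using TensorProduct.induction_on with
    | zero => simp
    | tmul p q => simp [Lsh1, Dc2_tmul]
    | add p q hp hq => simp only [tmul_add, map_add, add_tmul, hp, hq]
  | add p q hp hq => simp only [add_tmul, map_add, hp, hq]

lemma key2 (u v : H ⊗[K] H) :
    (Dc2 K H).lTensor (H ⊗[K] H)
        (TensorProduct.tensorTensorTensorComm K H H H H (u ⊗ₜ[K] v)) =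
      Lsh2 K H (((ΔH K H).lTensor H u) ⊗ₜ[K] ((ΔH K H).lTensor H v)) := by
  induction u using TensorProduct.induction_on with
  | zero => simp
  | tmul x y =>
    induction v using TensorProduct.induction_on with
    | zero => simp
    | tmul p q => simp [Lsh2, Dc2_tmul]
    | add p q hp hq => simp only [tmul_add, map_add, add_tmul, hp, hq]
  | add p q hp hq => simp only [add_tmul, map_add, hp, hq]

lemma coassocH (a : H) :
    TensorProduct.assoc K H H H ((ΔH K H).rTensor H (ΔH K H a)) =
      (ΔH K H).lTensor H (ΔH K H a) :=
  Coalgebra.coassoc_apply a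

lemma key3 (P Q : (H ⊗[K] H) ⊗[K] H) :
    TensorProduct.assoc K (H ⊗[K] H) (H ⊗[K] H) (H ⊗[K] H) (Lsh1 K H (P ⊗ₜ[K] Q)) =
      Lsh2 K H ((TensorProduct.assoc K H H H P) ⊗ₜ[K] (TensorProduct.assoc K H H H Q)) := by
  induction P using TensorProduct.induction_on with
  | zero => simp
  | tmul u h =>
    induction Q using TensorProduct.induction_on with
    | zero => simp
    | tmul v h' =>
      induction u using TensorProduct.induction_on with
      | zero => simp
      | tmul x y =>
        induction v using TensorProduct.induction_on with
        | zero => simp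
        | tmul p q => simp [Lsh1, Lsh2]
        | add s t hs ht => simp only [add_tmul, tmul_add, map_add, hs, ht]
      | add s t hs ht => simp only [add_tmul, tmul_add, map_add, hs, ht]
    | add s t hs ht => simp only [tmul_add, map_add, hs, ht]
  | add s t hs ht => simp only [add_tmul, map_add, hs, ht]

lemma coassocC (x : H ⊗[K] H) :
    TensorProduct.assoc K (H ⊗[K] H) (H ⊗[K] H) (H ⊗[K] H)
        ((Dc2 K H).rTensor (H ⊗[K] H) (Dc2 K H x)) =
      (Dc2 K H).lTensor (H ⊗[K] H) (Dc2 K H x) := by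
  induction x using TensorProduct.induction_on with
  | zero => simp
  | tmul a b =>
    rw [Dc2_tmul, key1, key3, key2, coassocH, coassocH]
  | add s t hs ht => simp only [map_add, hs, ht]

lemma hlC (x : H ⊗[K] H) :
    (Ec2 K H).rTensor (H ⊗[K] H) (Dc2 K H x) = (1 : K) ⊗ₜ[K] x := by
  have key : ∀ u v : H ⊗[K] H,
      (Ec2 K H).rTensor (H ⊗[K] H)
          (TensorProduct.tensorTensorTensorComm K H H H H (u ⊗ₜ[K] v)) =
        (TensorProduct.map (LinearMap.mul' K K) LinearMap.id ∘ₗ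
          (TensorProduct.tensorTensorTensorComm K K H K H).toLinearMap)
            (((εH K H).rTensor H u) ⊗ₜ[K] ((εH K H).rTensor H v)) := by
    intro u v
    induction u using TensorProduct.induction_on with
    | zero => simp
    | tmul x y =>
      induction v using TensorProduct.induction_on with
      | zero => simp
      | tmul p q => simp
      | add p q hp hq => simp only [tmul_add, map_add, add_tmul, hp, hq]
    | add p q hp hq => simp only [add_tmul, map_add, hp, hq]
  induction x using TensorProduct.induction_on with
  | zero => simp
  | tmul a b =>
    rw [Dc2_tmul, key]
    rw [show (εH K H).rTensor H (ΔH K H a) = (1 : K) ⊗ₜ[K] a from Coalgebra.rTensor_counit_comul a,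
        show (εH K H).rTensor H (ΔH K H b) = (1 : K) ⊗ₜ[K] b from Coalgebra.rTensor_counit_comul b]
    simp
  | add s t hs ht => simp only [map_add, hs, ht, tmul_add]

lemma hrC (x : H ⊗[K] H) :
    (Ec2 K H).lTensor (H ⊗[K] H) (Dc2 K H x) = x ⊗ₜ[K] (1 : K) := by
  have key : ∀ u v : H ⊗[K] H,
      (Ec2 K H).lTensor (H ⊗[K] H)
          (TensorProduct.tensorTensorTensorComm K H H H H (u ⊗ₜ[K] v)) =
        (TensorProduct.map LinearMap.id (LinearMap.mul' K K) ∘ₗ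
          (TensorProduct.tensorTensorTensorComm K H K H K).toLinearMap)
            (((εH K H).lTensor H u) ⊗ₜ[K] ((εH K H).lTensor H v)) := by
    intro u v
    induction u using TensorProduct.induction_on with
    | zero => simp
    | tmul x y =>
      induction v using TensorProduct.induction_on with
      | zero => simp
      | tmul p q => simp
      | add p q hp hq => simp only [tmul_add, map_add, add_tmul, hp, hq]
    | add p q hp hq => simp only [add_tmul, map_add, hp, hq]
  induction x using TensorProduct.induction_on with
  | zero => simp
  | tmul a b =>
    rw [Dc2_tmul, key]
    rw [show (εH K H).lTensor H (ΔH K H a) = a ⊗ₜ[K] (1 : K) from Coalgebra.lTensor_counit_comul a,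
        show (εH K H).lTensor H (ΔH K H b) = b ⊗ₜ[K] (1 : K) from Coalgebra.lTensor_counit_comul b]
    simp
  | add s t hs ht => simp only [map_add, hs, ht, add_tmul]

/-- `sandwich (x ⊗ y) h = x * h * S(y)`. -/
noncomputable def sandwich : (H ⊗[K] H) →ₗ[K] H →ₗ[K] H :=
  TensorProduct.lift
    (LinearMap.mk₂ K (fun x y => LinearMap.mulLeft K x ∘ₗ LinearMap.mulRight K (SH K H y))
      (fun x x' y => by ext h; simp [add_mul])
      (fun c x y => by ext h; simp [smul_mul_assoc])
      (fun x y y' => by ext h; simp [mul_add])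
      (fun c x y => by ext h; simp))

@[simp] lemma sandwich_tmul (x y h : H) :
    sandwich K H (x ⊗ₜ[K] y) h = x * (h * SH K H y) := rfl

lemma sandwich_one (u : H ⊗[K] H) : sandwich K H u 1 = Lchi K H u := by
  induction u using TensorProduct.induction_on with
  | zero => simp
  | tmul x y => simp
  | add s t hs ht => simp only [map_add, LinearMap.add_apply, hs, ht]

theorem antipode_mul (x y : H) : SH K H (x * y) = SH K H y * SH K H x := by
  have hfM : conv K H (Dc2 K H) (SH K H ∘ₗ muH K H) (muH K H) =
      Algebra.linearMap K H ∘ₗ Ec2 K H := by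
    have key : ∀ u v : H ⊗[K] H,
        muH K H (TensorProduct.map (SH K H ∘ₗ muH K H) (muH K H)
          (TensorProduct.tensorTensorTensorComm K H H H H (u ⊗ₜ[K] v))) =
        LchiInv K H (u * v) := by
      intro u v
      induction u using TensorProduct.induction_on with
      | zero => simp
      | tmul a b =>
        induction v using TensorProduct.induction_on with
        | zero => simp
        | tmul p q => simp [muH, Algebra.TensorProduct.tmul_mul_tmul]
        | add p q hp hq => simp only [tmul_add, map_add, mul_add, hp, hq]
      | add p q hp hq => simp only [add_tmul, map_add, add_mul, hp, hq]
    apply TensorProduct.ext'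
    intro a b
    rw [conv_apply, Dc2_tmul, key]
    rw [show ΔH K H a * ΔH K H b = ΔH K H (a * b) from (Bialgebra.comul_mul a b).symm]
    rw [LchiInv_comul]
    simp [εH, Bialgebra.counit_mul]
  have hMg : conv K H (Dc2 K H) (muH K H)
      (muH K H ∘ₗ TensorProduct.map (SH K H) (SH K H) ∘ₗ (TensorProduct.comm K H H).toLinearMap) =
      Algebra.linearMap K H ∘ₗ Ec2 K H := by
    have key : ∀ u v : H ⊗[K] H,
        muH K H (TensorProduct.map (muH K H)
          (muH K H ∘ₗ TensorProduct.map (SH K H) (SH K H) ∘ₗ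
            (TensorProduct.comm K H H).toLinearMap)
          (TensorProduct.tensorTensorTensorComm K H H H H (u ⊗ₜ[K] v))) =
        sandwich K H u (Lchi K H v) := by
      intro u v
      induction u using TensorProduct.induction_on with
      | zero => simp
      | tmul a b =>
        induction v using TensorProduct.induction_on with
        | zero => simp
        | tmul p q => simp [muH, mul_assoc]
        | add p q hp hq => simp only [tmul_add, map_add, hp, hq]
      | add p q hp hq => simp only [add_tmul, map_add, LinearMap.add_apply, hp, hq]
    apply TensorProduct.ext'
    intro a b
    rw [conv_apply, Dc2_tmul, key, Lchi_comul]
    rw [Algebra.algebraMap_eq_smul_one, map_smul, sandwich_one, Lchi_comul]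
    simp only [LinearMap.coe_comp, Function.comp_apply, Algebra.linearMap_apply, Ec2_tmul,
      map_mul]
    rw [Algebra.smul_def]
    exact Algebra.commutes _ _
  have main := conv_inv_unique K H (Dc2 K H) (Ec2 K H) (coassocC K H) (hlC K H) (hrC K H)
    (SH K H ∘ₗ muH K H) (muH K H)
    (muH K H ∘ₗ TensorProduct.map (SH K H) (SH K H) ∘ₗ (TensorProduct.comm K H H).toLinearMap)
    hfM hMg
  have := LinearMap.congr_fun main (x ⊗ₜ[K] y)
  simpa [muH] using this

end AntipodeMul



section AlgebraSide

open LinearMap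

@[simp] lemma counitLeft_tmul (x y : H) :
    counitLeft K H (x ⊗ₜ[K] y) = εH K H x • y := by
  simp [counitLeft]

@[simp] lemma counitRight_tmul (x y : H) :
    counitRight K H (x ⊗ₜ[K] y) = εH K H y • x := by
  simp [counitRight]

lemma counitLeft_mul (X Y : H ⊗[K] H) :
    counitLeft K H (X * Y) = counitLeft K H X * counitLeft K H Y := by
  induction X using TensorProduct.induction_on with
  | zero => simp
  | tmul x y =>
    induction Y using TensorProduct.induction_on with
    | zero => simp
    | tmul p q =>
      simp only [Algebra.TensorProduct.tmul_mul_tmul, counitLeft_tmul]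
      rw [show εH K H (x * p) = εH K H x * εH K H p from Bialgebra.counit_mul x p,
        smul_mul_smul_comm]
    | add p q hp hq => simp only [mul_add, map_add, hp, hq]
  | add p q hp hq => simp only [add_mul, map_add, hp, hq]

lemma counitRight_mul (X Y : H ⊗[K] H) :
    counitRight K H (X * Y) = counitRight K H X * counitRight K H Y := by
  induction X using TensorProduct.induction_on with
  | zero => simp
  | tmul x y =>
    induction Y using TensorProduct.induction_on with
    | zero => simp
    | tmul p q =>
      simp only [Algebra.TensorProduct.tmul_mul_tmul, counitRight_tmul]
      rw [show εH K H (y * q) = εH K H y * εH K H q from Bialgebra.counit_mul y q,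
        smul_mul_smul_comm]
    | add p q hp hq => simp only [mul_add, map_add, hp, hq]
  | add p q hp hq => simp only [add_mul, map_add, hp, hq]

lemma counitLeft_one : counitLeft K H (1 : H ⊗[K] H) = 1 := by
  rw [Algebra.TensorProduct.one_def]
  simp [show εH K H 1 = 1 from Bialgebra.counit_one]

lemma counitRight_one : counitRight K H (1 : H ⊗[K] H) = 1 := by
  rw [Algebra.TensorProduct.one_def]
  simp [show εH K H 1 = 1 from Bialgebra.counit_one]

variable {F Finv : H ⊗[K] H}

lemma counitLeft_Finv (hF : IsTwist K H F Finv) : counitLeft K H Finv = 1 := by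
  have h1 : counitLeft K H F * counitLeft K H Finv = 1 := by
    rw [← counitLeft_mul, hF.mul_inv, counitLeft_one]
  rw [hF.counit_left, one_mul] at h1
  exact h1

lemma counitRight_Finv (hF : IsTwist K H F Finv) : counitRight K H Finv = 1 := by
  have h1 : counitRight K H F * counitRight K H Finv = 1 := by
    rw [← counitRight_mul, hF.mul_inv, counitRight_one]
  rw [hF.counit_right, one_mul] at h1
  exact h1

/-! #### multiplicativity of the four leg-insertion maps -/

@[simp] lemma ins3_tmul (x y : H) : ins3 K H (x ⊗ₜ[K] y) = x ⊗ₜ[K] (y ⊗ₜ[K] (1 : H)) := by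
  simp [ins3]

@[simp] lemma ins1_apply (X : H ⊗[K] H) : ins1 K H X = (1 : H) ⊗ₜ[K] X := rfl

@[simp] lemma comulRight_tmul (x y : H) :
    comulRight K H (x ⊗ₜ[K] y) = x ⊗ₜ[K] (ΔH K H y) := by
  simp [comulRight]

@[simp] lemma comulLeft_tmul (x y : H) :
    comulLeft K H (x ⊗ₜ[K] y) = TensorProduct.assoc K H H H ((ΔH K H x) ⊗ₜ[K] y) := by
  simp [comulLeft]

lemma ins3_mul (X Y : H ⊗[K] H) : ins3 K H (X * Y) = ins3 K H X * ins3 K H Y := by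
  induction X using TensorProduct.induction_on with
  | zero => simp
  | tmul x y =>
    induction Y using TensorProduct.induction_on with
    | zero => simp
    | tmul p q => simp [Algebra.TensorProduct.tmul_mul_tmul]
    | add p q hp hq => simp only [mul_add, map_add, hp, hq]
  | add p q hp hq => simp only [add_mul, map_add, hp, hq]

lemma ins3_one : ins3 K H (1 : H ⊗[K] H) = 1 := by
  rw [Algebra.TensorProduct.one_def]
  rw [show (1 : H ⊗[K] (H ⊗[K] H)) = (1 : H) ⊗ₜ[K] ((1 : H) ⊗ₜ[K] (1 : H)) by
    rw [Algebra.TensorProduct.one_def, Algebra.TensorProduct.one_def]]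
  simp

lemma ins1_mul (X Y : H ⊗[K] H) : ins1 K H (X * Y) = ins1 K H X * ins1 K H Y := by
  simp [Algebra.TensorProduct.tmul_mul_tmul]

lemma ins1_one : ins1 K H (1 : H ⊗[K] H) = 1 := by
  rw [show (1 : H ⊗[K] (H ⊗[K] H)) = (1 : H) ⊗ₜ[K] (1 : H ⊗[K] H) from
    Algebra.TensorProduct.one_def]
  simp

lemma assoc_mul (P Q : (H ⊗[K] H) ⊗[K] H) :
    TensorProduct.assoc K H H H (P * Q) =
      TensorProduct.assoc K H H H P * TensorProduct.assoc K H H H Q := by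
  induction P using TensorProduct.induction_on with
  | zero => simp
  | tmul u h =>
    induction Q using TensorProduct.induction_on with
    | zero => simp
    | tmul v h' =>
      induction u using TensorProduct.induction_on with
      | zero => simp
      | tmul x y =>
        induction v using TensorProduct.induction_on with
        | zero => simp
        | tmul p q => simp [Algebra.TensorProduct.tmul_mul_tmul]
        | add s t hs ht =>
          simp only [add_tmul, add_mul, mul_add, map_add, hs, ht]
      | add s t hs ht => simp only [add_tmul, add_mul, mul_add, map_add, hs, ht]
    | add s t hs ht => simp only [mul_add, map_add, hs, ht]
  | add s t hs ht => simp only [add_mul, map_add, hs, ht]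

lemma comulLeft_mul (X Y : H ⊗[K] H) :
    comulLeft K H (X * Y) = comulLeft K H X * comulLeft K H Y := by
  induction X using TensorProduct.induction_on with
  | zero => simp
  | tmul x y =>
    induction Y using TensorProduct.induction_on with
    | zero => simp
    | tmul p q =>
      simp only [Algebra.TensorProduct.tmul_mul_tmul, comulLeft_tmul]
      rw [show ΔH K H (x * p) = ΔH K H x * ΔH K H p from Bialgebra.comul_mul x p]
      rw [← assoc_mul, Algebra.TensorProduct.tmul_mul_tmul]
    | add p q hp hq => simp only [mul_add, map_add, hp, hq]
  | add p q hp hq => simp only [add_mul, map_add, hp, hq]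

lemma comulLeft_one : comulLeft K H (1 : H ⊗[K] H) = 1 := by
  rw [Algebra.TensorProduct.one_def, comulLeft_tmul,
    show ΔH K H 1 = 1 from Bialgebra.comul_one, Algebra.TensorProduct.one_def]
  rw [show (1 : H ⊗[K] (H ⊗[K] H)) = (1 : H) ⊗ₜ[K] ((1 : H) ⊗ₜ[K] (1 : H)) by
    rw [Algebra.TensorProduct.one_def, Algebra.TensorProduct.one_def]]
  simp

lemma comulRight_mul (X Y : H ⊗[K] H) :
    comulRight K H (X * Y) = comulRight K H X * comulRight K H Y := by
  induction X using TensorProduct.induction_on with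
  | zero => simp
  | tmul x y =>
    induction Y using TensorProduct.induction_on with
    | zero => simp
    | tmul p q =>
      simp only [Algebra.TensorProduct.tmul_mul_tmul, comulRight_tmul]
      rw [show ΔH K H (y * q) = ΔH K H y * ΔH K H q from Bialgebra.comul_mul y q]
    | add p q hp hq => simp only [mul_add, map_add, hp, hq]
  | add p q hp hq => simp only [add_mul, map_add, hp, hq]

lemma comulRight_one : comulRight K H (1 : H ⊗[K] H) = 1 := by
  rw [Algebra.TensorProduct.one_def, comulRight_tmul,
    show ΔH K H 1 = 1 from Bialgebra.comul_one]
  rw [show (1 : H ⊗[K] (H ⊗[K] H)) = (1 : H) ⊗ₜ[K] (1 : H ⊗[K] H) from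
    Algebra.TensorProduct.one_def]

/-! #### rearrangements of the cocycle condition -/

lemma cocycle_solved (hF : IsTwist K H F Finv) :
    comulLeft K H F = ins3 K H Finv * ins1 K H F * comulRight K H F := by
  have h := hF.cocycle
  have : ins3 K H Finv * (ins3 K H F * comulLeft K H F) =
      ins3 K H Finv * (ins1 K H F * comulRight K H F) := by rw [h]
  rw [← mul_assoc, ← ins3_mul, hF.inv_mul, ins3_one, one_mul, ← mul_assoc] at this
  exact this

lemma r3 (hF : IsTwist K H F Finv) :
    comulLeft K H F * comulRight K H Finv = ins3 K H Finv * ins1 K H F := by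
  rw [cocycle_solved K H hF, mul_assoc, mul_assoc, ← comulRight_mul, hF.mul_inv,
    comulRight_one, mul_one]

lemma r2 (hF : IsTwist K H F Finv) :
    ins1 K H Finv * ins3 K H F = comulRight K H F * comulLeft K H Finv := by
  have h := hF.cocycle
  have h1 : ins1 K H Finv * (ins3 K H F * comulLeft K H F) = comulRight K H F := by
    rw [h, ← mul_assoc, ← ins1_mul, hF.inv_mul, ins1_one, one_mul]
  have h2 : ins1 K H Finv * ins3 K H F * (comulLeft K H F * comulLeft K H Finv) =
      comulRight K H F * comulLeft K H Finv := by
    rw [show ins1 K H Finv * ins3 K H F * (comulLeft K H F * comulLeft K H Finv) =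
      ins1 K H Finv * (ins3 K H F * comulLeft K H F) * comulLeft K H Finv by
        simp only [mul_assoc], h1]
  rw [← comulLeft_mul, hF.mul_inv, comulLeft_one, mul_one] at h2
  exact h2

lemma r1 (hF : IsTwist K H F Finv) :
    comulLeft K H Finv = comulRight K H Finv * ins1 K H Finv * ins3 K H F := by
  set X := comulRight K H Finv * ins1 K H Finv * ins3 K H F with hX
  have hCX : comulLeft K H F * X = 1 := by
    rw [cocycle_solved K H hF, hX]
    calc ins3 K H Finv * ins1 K H F * comulRight K H F *
          (comulRight K H Finv * ins1 K H Finv * ins3 K H F)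
        = ins3 K H Finv * (ins1 K H F * ((comulRight K H F * comulRight K H Finv) *
            ins1 K H Finv)) * ins3 K H F := by simp only [mul_assoc]
      _ = 1 := by
          rw [← comulRight_mul, hF.mul_inv, comulRight_one, one_mul, ← ins1_mul, hF.mul_inv,
            ins1_one, mul_one, ← ins3_mul, hF.inv_mul, ins3_one]
  have hCC : comulLeft K H Finv * comulLeft K H F = 1 := by
    rw [← comulLeft_mul, hF.inv_mul, comulLeft_one]
  calc comulLeft K H Finv = comulLeft K H Finv * (comulLeft K H F * X) := by
        rw [hCX, mul_one]
    _ = (comulLeft K H Finv * comulLeft K H F) * X := by rw [mul_assoc]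
    _ = X := by rw [hCC, one_mul]

end AlgebraSide


section Telescopes

open LinearMap

/-- `Th1 (x ⊗ (y ⊗ z)) = x * (S y * z)`. -/
noncomputable def Th1 : H ⊗[K] (H ⊗[K] H) →ₗ[K] H :=
  muH K H ∘ₗ (LchiInv K H).lTensor H

/-- `Th2 (x ⊗ (y ⊗ z)) = S x * (y * S z)`. -/
noncomputable def Th2 : H ⊗[K] (H ⊗[K] H) →ₗ[K] H :=
  muH K H ∘ₗ TensorProduct.map (SH K H) (Lchi K H)

@[simp] lemma Th1_tmul (x : H) (W : H ⊗[K] H) :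
    Th1 K H (x ⊗ₜ[K] W) = x * LchiInv K H W := rfl

@[simp] lemma Th2_tmul (x : H) (W : H ⊗[K] H) :
    Th2 K H (x ⊗ₜ[K] W) = SH K H x * Lchi K H W := rfl

lemma T1' (w w' : H ⊗[K] H) (a b' : H) :
    Th1 K H ((a ⊗ₜ[K] w') * (TensorProduct.assoc K H H H (w ⊗ₜ[K] b'))) =
      a * Lchi K H w * LchiInv K H w' * b' := by
  induction w using TensorProduct.induction_on with
  | zero => simp
  | tmul w1 w2 =>
    induction w' using TensorProduct.induction_on with
    | zero => simp
    | tmul u1 u2 =>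
      simp only [TensorProduct.assoc_tmul, Algebra.TensorProduct.tmul_mul_tmul, Th1_tmul,
        LchiInv_tmul, Lchi_tmul]
      rw [antipode_mul]
      simp only [mul_assoc]
    | add s t hs ht =>
      simp only [tmul_add, add_tmul, add_mul, mul_add, map_add, hs, ht]
  | add s t hs ht => simp only [add_tmul, add_mul, mul_add, map_add, hs, ht]

lemma T1 (A B : H ⊗[K] H) :
    Th1 K H (comulRight K H A * comulLeft K H B) = counitRight K H A * counitLeft K H B := by
  induction A using TensorProduct.induction_on with
  | zero => simp
  | tmul a a' =>
    induction B using TensorProduct.induction_on with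
    | zero => simp
    | tmul b b' =>
      rw [comulRight_tmul, comulLeft_tmul, T1', Lchi_comul, LchiInv_comul,
        counitRight_tmul, counitLeft_tmul]
      simp only [Algebra.algebraMap_eq_smul_one, mul_smul_comm, smul_mul_assoc, mul_one,
        one_mul, smul_smul]
      rw [mul_comm]
    | add s t hs ht => simp only [mul_add, map_add, hs, ht]
  | add s t hs ht => simp only [add_mul, map_add, hs, ht]

lemma T1a (X Y : H ⊗[K] H) :
    Th1 K H (ins1 K H Y * ins3 K H X) = Lchi K H X * LchiInv K H Y := by
  induction X using TensorProduct.induction_on with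
  | zero => simp
  | tmul x x' =>
    induction Y using TensorProduct.induction_on with
    | zero => simp
    | tmul y y' =>
      simp only [ins1_apply, ins3_tmul, Algebra.TensorProduct.tmul_mul_tmul, Th1_tmul,
        one_mul, mul_one, LchiInv_tmul, Lchi_tmul]
      rw [antipode_mul]
      simp only [mul_assoc]
    | add s t hs ht => simp only [add_tmul, add_mul, mul_add, map_add, hs, ht]
  | add s t hs ht => simp only [tmul_add, add_mul, mul_add, map_add, hs, ht]

variable {F Finv : H ⊗[K] H}

theorem chi_mul_chiInv (hF : IsTwist K H F Finv) : chi K H F * chiInv K H Finv = 1 := by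
  rw [chi_eq_Lchi, chiInv_eq_LchiInv, ← T1a, r2 K H hF, T1, hF.counit_right,
    counitLeft_Finv K H hF, one_mul]

lemma T2' (w w' : H ⊗[K] H) (b a' : H) :
    Th2 K H ((TensorProduct.assoc K H H H (w ⊗ₜ[K] a')) * (b ⊗ₜ[K] w')) =
      SH K H b * LchiInv K H w * Lchi K H w' * SH K H a' := by
  induction w using TensorProduct.induction_on with
  | zero => simp
  | tmul w1 w2 =>
    induction w' using TensorProduct.induction_on with
    | zero => simp
    | tmul u1 u2 =>
      simp only [TensorProduct.assoc_tmul, Algebra.TensorProduct.tmul_mul_tmul, Th2_tmul,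
        LchiInv_tmul, Lchi_tmul]
      rw [antipode_mul, antipode_mul]
      simp only [mul_assoc]
    | add s t hs ht =>
      simp only [tmul_add, add_tmul, add_mul, mul_add, map_add, hs, ht]
  | add s t hs ht => simp only [add_tmul, add_mul, mul_add, map_add, hs, ht]

lemma T2 (A B : H ⊗[K] H) :
    Th2 K H (comulLeft K H A * comulRight K H B) =
      SH K H (counitLeft K H A * counitRight K H B) := by
  induction A using TensorProduct.induction_on with
  | zero => simp
  | tmul a a' =>
    induction B using TensorProduct.induction_on with
    | zero => simp
    | tmul b b' =>
      rw [comulRight_tmul, comulLeft_tmul, T2', LchiInv_comul, Lchi_comul,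
        counitRight_tmul, counitLeft_tmul]
      rw [smul_mul_smul_comm, map_smul, antipode_mul]
      simp only [Algebra.algebraMap_eq_smul_one, mul_smul_comm, smul_mul_assoc, mul_one,
        one_mul, smul_smul]
      rw [mul_comm]
    | add s t hs ht => simp only [mul_add, map_add, hs, ht]
  | add s t hs ht => simp only [add_mul, map_add, hs, ht]

lemma T2a (X Y : H ⊗[K] H) :
    Th2 K H (ins3 K H Y * ins1 K H X) = LchiInv K H Y * Lchi K H X := by
  induction X using TensorProduct.induction_on with
  | zero => simp
  | tmul x x' =>
    induction Y using TensorProduct.induction_on with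
    | zero => simp
    | tmul y y' =>
      simp only [ins1_apply, ins3_tmul, Algebra.TensorProduct.tmul_mul_tmul, Th2_tmul,
        one_mul, mul_one, LchiInv_tmul, Lchi_tmul]
      simp only [mul_assoc]
    | add s t hs ht => simp only [add_tmul, add_mul, mul_add, map_add, hs, ht]
  | add s t hs ht => simp only [tmul_add, add_mul, mul_add, map_add, hs, ht]

theorem chiInv_mul_chi (hF : IsTwist K H F Finv) : chiInv K H Finv * chi K H F = 1 := by
  rw [chiInv_eq_LchiInv, chi_eq_Lchi, ← T2a, ← r3 K H hF, T2, hF.counit_left,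
    counitRight_Finv K H hF, one_mul, SH_one]

end Telescopes


section ClosedForms

open LinearMap

lemma LchiInv_one : LchiInv K H (1 : H ⊗[K] H) = 1 := by
  rw [Algebra.TensorProduct.one_def]
  simp [SH_one]

lemma L5a (V : H ⊗[K] H) (w w' : H) :
    LchiInv K H (V * (w ⊗ₜ[K] w')) = SH K H w * LchiInv K H V * w' := by
  induction V using TensorProduct.induction_on with
  | zero => simp
  | tmul v v' =>
    simp only [Algebra.TensorProduct.tmul_mul_tmul, LchiInv_tmul]
    rw [antipode_mul]
    simp only [mul_assoc]
  | add s t hs ht => simp only [add_mul, mul_add, map_add, hs, ht]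

lemma L5 (x : H) (W : H ⊗[K] H) :
    LchiInv K H (ΔH K H x * W) = εH K H x • LchiInv K H W := by
  induction W using TensorProduct.induction_on with
  | zero => simp
  | tmul w w' =>
    rw [L5a, LchiInv_comul]
    simp only [LchiInv_tmul, Algebra.algebraMap_eq_smul_one, mul_smul_comm, smul_mul_assoc,
      mul_one, one_mul]
  | add s t hs ht => simp only [mul_add, map_add, smul_add, hs, ht]

lemma lemG (X Y : H ⊗[K] H) :
    LchiInv K H (TensorProduct.map LinearMap.id (LinearMap.mulLeft K (LchiInv K H Y)) X) =
      LchiInv K H (Y * X) := by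
  induction X using TensorProduct.induction_on with
  | zero => simp
  | tmul x x' =>
    rw [L5a]
    simp only [TensorProduct.map_tmul, LinearMap.id_coe, id_eq, LinearMap.mulLeft_apply,
      LchiInv_tmul]
    simp only [mul_assoc]
  | add s t hs ht => simp only [mul_add, map_add, hs, ht]

variable (F Finv : H ⊗[K] H)

/-- `Σ S^F(w¹) * w²`. -/
noncomputable def LchiInvF : H ⊗[K] H →ₗ[K] H :=
  muH K H ∘ₗ (twistAntipode K H F Finv).rTensor H

lemma twistAntipode_apply (ξ : H) :
    twistAntipode K H F Finv ξ = chi K H F * (SH K H ξ * chiInv K H Finv) := rfl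

@[simp] lemma LchiInvF_tmul (x y : H) :
    LchiInvF K H F Finv (x ⊗ₜ[K] y) =
      chi K H F * (SH K H x * chiInv K H Finv) * y := rfl

lemma L2a (V : H ⊗[K] H) (w w' : H) :
    LchiInvF K H F Finv (V * (w ⊗ₜ[K] w')) =
      (chi K H F * SH K H w) *
        LchiInv K H (TensorProduct.map LinearMap.id
          (LinearMap.mulLeft K (chiInv K H Finv)) V) * w' := by
  induction V using TensorProduct.induction_on with
  | zero => simp
  | tmul v v' =>
    simp only [Algebra.TensorProduct.tmul_mul_tmul, LchiInvF_tmul, TensorProduct.map_tmul,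
      LinearMap.id_coe, id_eq, LinearMap.mulLeft_apply, LchiInv_tmul]
    rw [antipode_mul]
    simp only [mul_assoc]
  | add s t hs ht => simp only [add_mul, mul_add, map_add, LinearMap.add_apply, hs, ht]

variable {F Finv}

lemma L2 (hF : IsTwist K H F Finv) (W : H ⊗[K] H) :
    LchiInvF K H F Finv (F * W) = chi K H F * LchiInv K H W := by
  induction W using TensorProduct.induction_on with
  | zero => simp
  | tmul w w' =>
    rw [L2a, chiInv_eq_LchiInv, lemG, hF.inv_mul, LchiInv_one, mul_one]
    simp only [LchiInv_tmul, mul_assoc]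
  | add s t hs ht => simp only [mul_add, map_add, hs, ht]

/-- `x ⊗ (y ⊗ z) ↦ (x*y) ⊗ z`. -/
noncomputable def left1mul : H ⊗[K] (H ⊗[K] H) →ₗ[K] H ⊗[K] H :=
  (muH K H).rTensor H ∘ₗ (TensorProduct.assoc K H H H).symm.toLinearMap

@[simp] lemma left1mul_tmul (x y z : H) :
    left1mul K H (x ⊗ₜ[K] (y ⊗ₜ[K] z)) = (x * y) ⊗ₜ[K] z := by
  simp [left1mul, muH]

lemma left1mul_one (X : H ⊗[K] H) : left1mul K H ((1 : H) ⊗ₜ[K] X) = X := by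
  induction X using TensorProduct.induction_on with
  | zero => simp
  | tmul x y => simp
  | add s t hs ht => simp only [tmul_add, map_add, hs, ht]

lemma T3 (A B C' : H ⊗[K] H) :
    (LchiInv K H).lTensor H (comulRight K H A * ins1 K H B * ins3 K H C') =
      left1mul K H ((counitRight K H A) ⊗ₜ[K]
        (TensorProduct.map LinearMap.id
          (LinearMap.mulRight K (LchiInv K H B) ∘ₗ SH K H) C')) := by
  induction A using TensorProduct.induction_on with
  | zero => simp
  | tmul a a' =>
    induction C' using TensorProduct.induction_on with
    | zero => simp
    | tmul c c' =>
      rw [comulRight_tmul, ins1_apply, ins3_tmul]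
      rw [Algebra.TensorProduct.tmul_mul_tmul, Algebra.TensorProduct.tmul_mul_tmul]
      rw [lTensor_tmul]
      rw [mul_assoc (ΔH K H a') B, L5, L5a]
      simp only [counitRight_tmul, TensorProduct.map_tmul, LinearMap.coe_comp,
        Function.comp_apply, LinearMap.id_coe, id_eq, LinearMap.mulRight_apply,
        TensorProduct.smul_tmul', map_smul, left1mul_tmul, mul_one, one_mul,
        TensorProduct.tmul_smul, smul_mul_assoc]
    | add s t hs ht => simp only [mul_add, map_add, tmul_add, hs, ht]
  | add s t hs ht => simp only [add_mul, mul_add, map_add, add_tmul, map_add, hs, ht]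

lemma beta_closed (hF : IsTwist K H F Finv) :
    (LchiInv K H).lTensor H (comulLeft K H Finv) =
      TensorProduct.map LinearMap.id
        (LinearMap.mulRight K (chiInv K H Finv) ∘ₗ SH K H) F := by
  rw [r1 K H hF, T3, counitRight_Finv K H hF, chiInv_eq_LchiInv, left1mul_one]

/-- twisted `comulLeft`. -/
noncomputable def comulLeftF (F' Finv' : H ⊗[K] H) : H ⊗[K] H →ₗ[K] H ⊗[K] (H ⊗[K] H) :=
  (TensorProduct.assoc K H H H).toLinearMap ∘ₗ (twistComul K H F' Finv').rTensor H

lemma assoc_ins3 (X : H ⊗[K] H) :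
    TensorProduct.assoc K H H H (X ⊗ₜ[K] (1 : H)) = ins3 K H X := by
  induction X using TensorProduct.induction_on with
  | zero => simp
  | tmul x y => simp
  | add s t hs ht => simp only [add_tmul, map_add, hs, ht]

lemma comulLeftF_eq (W : H ⊗[K] H) :
    comulLeftF K H F Finv W = ins3 K H F * comulLeft K H W * ins3 K H Finv := by
  induction W using TensorProduct.induction_on with
  | zero => simp
  | tmul x y =>
    have : twistComul K H F Finv x = F * (ΔH K H x * Finv) := rfl
    rw [show comulLeftF K H F Finv (x ⊗ₜ[K] y) = TensorProduct.assoc K H H H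
      ((twistComul K H F Finv x) ⊗ₜ[K] y) from rfl]
    rw [this]
    rw [show (F * (ΔH K H x * Finv)) ⊗ₜ[K] y =
        (F ⊗ₜ[K] (1 : H)) * ((ΔH K H x ⊗ₜ[K] y) * (Finv ⊗ₜ[K] (1 : H))) by
      simp [Algebra.TensorProduct.tmul_mul_tmul]]
    rw [assoc_mul, assoc_mul, assoc_ins3, assoc_ins3, comulLeft_tmul, mul_assoc]
  | add s t hs ht => simp only [map_add, add_mul, mul_add, hs, ht]

lemma T4 (hF : IsTwist K H F Finv) (A C' : H ⊗[K] H) :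
    (LchiInvF K H F Finv).lTensor H (ins1 K H F * comulRight K H A * ins3 K H C') =
      left1mul K H ((counitRight K H A) ⊗ₜ[K]
        (TensorProduct.map LinearMap.id
          (LinearMap.mulLeft K (chi K H F) ∘ₗ SH K H) C')) := by
  induction A using TensorProduct.induction_on with
  | zero => simp
  | tmul a a' =>
    induction C' using TensorProduct.induction_on with
    | zero => simp
    | tmul c c' =>
      rw [comulRight_tmul, ins1_apply, ins3_tmul]
      rw [Algebra.TensorProduct.tmul_mul_tmul, Algebra.TensorProduct.tmul_mul_tmul]
      rw [lTensor_tmul]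
      rw [show F * (ΔH K H a') * (c' ⊗ₜ[K] (1 : H)) =
        F * (ΔH K H a' * (c' ⊗ₜ[K] (1 : H))) by rw [mul_assoc]]
      rw [L2 K H hF, L5]
      simp only [LchiInv_tmul, counitRight_tmul, TensorProduct.map_tmul, LinearMap.coe_comp,
        Function.comp_apply, LinearMap.id_coe, id_eq, LinearMap.mulLeft_apply,
        TensorProduct.smul_tmul', map_smul, left1mul_tmul, mul_one, one_mul,
        TensorProduct.tmul_smul, mul_smul_comm, smul_mul_assoc]
    | add s t hs ht => simp only [mul_add, map_add, tmul_add, hs, ht]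
  | add s t hs ht => simp only [add_mul, mul_add, map_add, add_tmul, map_add, hs, ht]

lemma gamma_closed (hF : IsTwist K H F Finv) :
    (LchiInvF K H F Finv).lTensor H (comulLeftF K H F Finv F) =
      TensorProduct.map LinearMap.id
        (LinearMap.mulLeft K (chi K H F) ∘ₗ SH K H) Finv := by
  rw [comulLeftF_eq, cocycle_solved K H hF]
  rw [show ins3 K H F * (ins3 K H Finv * ins1 K H F * comulRight K H F) * ins3 K H Finv =
      (ins3 K H F * ins3 K H Finv) * (ins1 K H F * comulRight K H F * ins3 K H Finv) by
    simp only [mul_assoc]]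
  rw [← ins3_mul, hF.mul_inv, ins3_one, one_mul]
  rw [T4 K H hF, hF.counit_right, left1mul_one]

end ClosedForms


section Bull

open LinearMap

/-- `bull (a ⊗ b) (c ⊗ d) = (a*c) ⊗ (d*b)`, i.e. the product of `H ⊗ H^op`. -/
noncomputable def bull : (H ⊗[K] H) →ₗ[K] (H ⊗[K] H) →ₗ[K] H ⊗[K] H :=
  TensorProduct.lift
    ((TensorProduct.mapBilinear (RingHom.id K) H H H H ∘ₗ LinearMap.mul K H).compl₂ (LinearMap.mul K H).flip)

@[simp] lemma bull_tmul (a b c d : H) :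
    bull K H (a ⊗ₜ[K] b) (c ⊗ₜ[K] d) = (a * c) ⊗ₜ[K] (d * b) := by
  simp [bull]

variable {F Finv : H ⊗[K] H}

lemma bull_CB (hF : IsTwist K H F Finv) (X Y : H ⊗[K] H) :
    bull K H (TensorProduct.map LinearMap.id (LinearMap.mulLeft K (chi K H F) ∘ₗ SH K H) Y)
      (TensorProduct.map LinearMap.id
        (LinearMap.mulRight K (chiInv K H Finv) ∘ₗ SH K H) X) =
      TensorProduct.map LinearMap.id (SH K H) (Y * X) := by
  induction X using TensorProduct.induction_on with
  | zero => simp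
  | tmul x x' =>
    induction Y using TensorProduct.induction_on with
    | zero => simp
    | tmul y y' =>
      simp only [TensorProduct.map_tmul, LinearMap.coe_comp, Function.comp_apply,
        LinearMap.id_coe, id_eq, LinearMap.mulLeft_apply, LinearMap.mulRight_apply,
        bull_tmul, Algebra.TensorProduct.tmul_mul_tmul]
      rw [antipode_mul]
      simp only [mul_assoc]
      rw [← mul_assoc (chiInv K H Finv) (chi K H F), chiInv_mul_chi K H hF, one_mul]
    | add s t hs ht => simp only [add_mul, map_add, LinearMap.add_apply, hs, ht]
  | add s t hs ht => simp only [mul_add, map_add, LinearMap.add_apply, hs, ht]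

lemma bull_BC (hF : IsTwist K H F Finv) (X Y : H ⊗[K] H) :
    bull K H (TensorProduct.map LinearMap.id
        (LinearMap.mulRight K (chiInv K H Finv) ∘ₗ SH K H) X)
      (TensorProduct.map LinearMap.id (LinearMap.mulLeft K (chi K H F) ∘ₗ SH K H) Y) =
      TensorProduct.map LinearMap.id
        (LinearMap.mulLeft K (chi K H F) ∘ₗ LinearMap.mulRight K (chiInv K H Finv) ∘ₗ SH K H)
        (X * Y) := by
  induction X using TensorProduct.induction_on with
  | zero => simp
  | tmul x x' =>
    induction Y using TensorProduct.induction_on with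
    | zero => simp
    | tmul y y' =>
      simp only [TensorProduct.map_tmul, LinearMap.coe_comp, Function.comp_apply,
        LinearMap.id_coe, id_eq, LinearMap.mulLeft_apply, LinearMap.mulRight_apply,
        bull_tmul, Algebra.TensorProduct.tmul_mul_tmul]
      rw [antipode_mul]
      simp only [mul_assoc]
    | add s t hs ht => simp only [mul_add, map_add, LinearMap.add_apply, hs, ht]
  | add s t hs ht => simp only [add_mul, map_add, LinearMap.add_apply, hs, ht]

lemma bull_gamma_beta (hF : IsTwist K H F Finv) :
    bull K H
      (TensorProduct.map LinearMap.id (LinearMap.mulLeft K (chi K H F) ∘ₗ SH K H) Finv)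
      (TensorProduct.map LinearMap.id
        (LinearMap.mulRight K (chiInv K H Finv) ∘ₗ SH K H) F) =
      (1 : H) ⊗ₜ[K] (1 : H) := by
  rw [bull_CB K H hF, hF.inv_mul, Algebra.TensorProduct.one_def]
  simp [SH_one]

lemma bull_beta_gamma (hF : IsTwist K H F Finv) :
    bull K H
      (TensorProduct.map LinearMap.id
        (LinearMap.mulRight K (chiInv K H Finv) ∘ₗ SH K H) F)
      (TensorProduct.map LinearMap.id (LinearMap.mulLeft K (chi K H F) ∘ₗ SH K H) Finv) =
      (1 : H) ⊗ₜ[K] (1 : H) := by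
  rw [bull_BC K H hF, hF.mul_inv, Algebra.TensorProduct.one_def]
  simp only [TensorProduct.map_tmul, LinearMap.coe_comp, Function.comp_apply,
    LinearMap.id_coe, id_eq, LinearMap.mulRight_apply, LinearMap.mulLeft_apply, SH_one,
    one_mul]
  rw [chi_mul_chiInv K H hF]

end Bull

section Semantics

open LinearMap

variable {M' : Type*} [AddCommGroup M'] [Module K M']
variable {m : M' →ₗ[K] M' →ₗ[K] M'} {L Rm : H →ₗ[K] M' →ₗ[K] M'}

lemma twistEnd_tmul (F1 F2 : H →ₗ[K] M' →ₗ[K] M') (x y : H) (P : M') :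
    twistEnd K H F1 F2 (x ⊗ₜ[K] y) P = F1 x (F2 y P) := rfl

lemma act_act (h𝔸 : IsHBimoduleAlgebra K H m L Rm) (X Y : H ⊗[K] H) (P : M') :
    twistEnd K H L Rm X (twistEnd K H L Rm Y P) =
      twistEnd K H L Rm (bull K H X Y) P := by
  induction X using TensorProduct.induction_on with
  | zero => simp
  | tmul x x' =>
    induction Y using TensorProduct.induction_on with
    | zero => simp
    | tmul y y' =>
      rw [bull_tmul, twistEnd_tmul, twistEnd_tmul, twistEnd_tmul, h𝔸.left_mul, h𝔸.right_mul]
      simp only [h𝔸.commute]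
    | add s t hs ht => simp only [map_add, LinearMap.add_apply, hs, ht]
  | add s t hs ht => simp only [map_add, LinearMap.add_apply, hs, ht]

lemma act_one (h𝔸 : IsHBimoduleAlgebra K H m L Rm) (P : M') :
    twistEnd K H L Rm ((1 : H) ⊗ₜ[K] (1 : H)) P = P := by
  rw [twistEnd_tmul, h𝔸.right_one, h𝔸.left_one]

variable {F Finv : H ⊗[K] H}

lemma sem1 (h𝔸 : IsHBimoduleAlgebra K H m L Rm) (w : H ⊗[K] H) (y : H) (P : M') :
    Rm y (twistEnd K H L (Rm ∘ₗ SH K H) w P) =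
      twistEnd K H L Rm
        ((LchiInv K H).lTensor H (TensorProduct.assoc K H H H (w ⊗ₜ[K] y))) P := by
  induction w using TensorProduct.induction_on with
  | zero => simp
  | tmul w1 w2 =>
    rw [TensorProduct.assoc_tmul, lTensor_tmul, LchiInv_tmul, twistEnd_tmul, twistEnd_tmul]
    simp only [LinearMap.coe_comp, Function.comp_apply]
    rw [h𝔸.right_mul]
    simp only [h𝔸.commute]
  | add s t hs ht => simp only [add_tmul, map_add, LinearMap.add_apply, hs, ht]

lemma DF_eq (h𝔸 : IsHBimoduleAlgebra K H m L Rm) (P : M') :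
    DF K H Finv L Rm P =
      twistEnd K H L Rm ((LchiInv K H).lTensor H (comulLeft K H Finv)) P := by
  rw [DF]
  induction Finv using TensorProduct.induction_on with
  | zero => simp
  | tmul x y =>
    rw [TensorProduct.comm_tmul, twistEnd_tmul, comulLeft_tmul]
    rw [show adjAct K H L Rm x P = twistEnd K H L (Rm ∘ₗ SH K H) (ΔH K H x) P from rfl]
    exact sem1 K H h𝔸 (ΔH K H x) y P
  | add s t hs ht => simp only [map_add, LinearMap.add_apply, hs, ht]

lemma sem2 (h𝔸 : IsHBimoduleAlgebra K H m L Rm) (w : H ⊗[K] H) (y : H) (P : M') :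
    Rm y (twistEnd K H L (Rm ∘ₗ twistAntipode K H F Finv) w P) =
      twistEnd K H L Rm
        ((LchiInvF K H F Finv).lTensor H (TensorProduct.assoc K H H H (w ⊗ₜ[K] y))) P := by
  induction w using TensorProduct.induction_on with
  | zero => simp
  | tmul w1 w2 =>
    rw [TensorProduct.assoc_tmul, lTensor_tmul,
      show LchiInvF K H F Finv (w2 ⊗ₜ[K] y) = twistAntipode K H F Finv w2 * y from rfl,
      twistEnd_tmul, twistEnd_tmul]
    simp only [LinearMap.coe_comp, Function.comp_apply]
    rw [h𝔸.right_mul]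
    simp only [h𝔸.commute]
  | add s t hs ht => simp only [add_tmul, map_add, LinearMap.add_apply, hs, ht]

lemma DFinv_eq' (h𝔸 : IsHBimoduleAlgebra K H m L Rm) (G : H ⊗[K] H) (P : M') :
    twistEnd K H Rm (adjActF K H F Finv L Rm) (TensorProduct.comm K H H G) P =
      twistEnd K H L Rm ((LchiInvF K H F Finv).lTensor H (comulLeftF K H F Finv G)) P := by
  induction G using TensorProduct.induction_on with
  | zero => simp
  | tmul x y =>
    rw [TensorProduct.comm_tmul, twistEnd_tmul,
      show comulLeftF K H F Finv (x ⊗ₜ[K] y) =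
        TensorProduct.assoc K H H H ((twistComul K H F Finv x) ⊗ₜ[K] y) from rfl]
    rw [show adjActF K H F Finv L Rm x P =
      twistEnd K H L (Rm ∘ₗ twistAntipode K H F Finv) (twistComul K H F Finv x) P from rfl]
    exact sem2 K H h𝔸 (twistComul K H F Finv x) y P
  | add s t hs ht => simp only [map_add, LinearMap.add_apply, hs, ht]

lemma DFinv_eq (h𝔸 : IsHBimoduleAlgebra K H m L Rm) (P : M') :
    DFinv K H F Finv L Rm P =
      twistEnd K H L Rm ((LchiInvF K H F Finv).lTensor H (comulLeftF K H F Finv F)) P := by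
  rw [DFinv]
  exact DFinv_eq' K H h𝔸 F P

end Semantics

end Aux

/-- the deformation map `D_{F⁻¹}` associated with the twist `F⁻¹`
of `H^F` is the inverse of `D_F`; in particular `χ_F = S^F(f^β) f_β = χ`. -/
theorem DFinv_is_inverse_of_DF (F Finv : H ⊗[K] H) (hF : IsTwist K H F Finv)
    (m : M →ₗ[K] M →ₗ[K] M) (L Rm : H →ₗ[K] M →ₗ[K] M)
    (h𝔸 : IsHBimoduleAlgebra K H m L Rm) :
    (∀ P : M, DFinv K H F Finv L Rm (DF K H Finv L Rm P) = P)
    ∧ (∀ P : M, DF K H Finv L Rm (DFinv K H F Finv L Rm P) = P)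
    ∧ muH K H ((twistAntipode K H F Finv).rTensor H F) = chi K H F := by
  refine ⟨?_, ?_, ?_⟩
  · intro P
    rw [DF_eq K H h𝔸 P, DFinv_eq K H h𝔸 _, act_act K H h𝔸,
      gamma_closed K H hF, beta_closed K H hF, bull_gamma_beta K H hF]
    exact act_one K H h𝔸 P
  · intro P
    rw [DFinv_eq K H h𝔸 P, DF_eq K H h𝔸 _, act_act K H h𝔸,
      gamma_closed K H hF, beta_closed K H hF, bull_beta_gamma K H hF]
    exact act_one K H h𝔸 P
  · calc muH K H ((twistAntipode K H F Finv).rTensor H F) = LchiInvF K H F Finv F := rfl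
      _ = LchiInvF K H F Finv (F * 1) := by rw [mul_one]
      _ = chi K H F * LchiInv K H 1 := L2 K H hF 1
      _ = chi K H F := by rw [LchiInv_one, mul_one]

end TwistPaper
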